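/- Let t > 4 and let h, k ∈ 𝔽_{q^n} satisfy h^{q^t+1} = k^{q^t+1} = −1. Then U_h and U_k are ΓL(2,q^n)-equivalent if and only if: there is a field automorphism ρ of 𝔽_{q^n} with h = k^ρ or h = −k^ρ, in case t ≢ 2 (mod 4); and there are a field automorphism ρ of 𝔽_{q^n} and ℓ ∈ 𝔽_{q^n} with ℓ^{q^2+1} = 1 such that h = ℓ·k^ρ, in case t ≡ 2 (mod 4). -/

import Mathlib

/-- The `q`-polynomial map `ψ_{h,t}(x) = x^q + x^{q^{t-1}} - h^{1-q^{t+1}} x^{q^{t+1}}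
    + h^{1-q^{2t-1}} x^{q^{2t-1}}`, where `h^{1-q^j}` means `h / h^{q^j}`. -/
def psiMap {F : Type*} [Field F] (q t : ℕ) (h : F) (x : F) : F :=
  x ^ q + x ^ q ^ (t - 1) - h / h ^ q ^ (t + 1) * x ^ q ^ (t + 1)
    + h / h ^ q ^ (2 * t - 1) * x ^ q ^ (2 * t - 1)

/-- The subspace `U_h = {(x, ψ_{h,t}(x)) : x ∈ 𝔽_{q^n}}`, as a set of column vectors. -/
def Uspace {F : Type*} [Field F] (q t : ℕ) (h : F) : Set (Fin 2 → F) :=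
  {w | ∃ x : F, w = ![x, psiMap q t h x]}

/-- `U, W ⊆ 𝔽_{q^n}²` are `ΓL(2,q^n)`-equivalent: for some field automorphism `ρ` and some
invertible matrix `A`, `A · ρ(U) = W`. -/
def GammaLEquiv {F : Type*} [Field F] (U W : Set (Fin 2 → F)) : Prop :=
  ∃ ρ : F ≃+* F, ∃ A : Matrix (Fin 2) (Fin 2) F, IsUnit A ∧
    (fun w => A.mulVec (fun i => ρ (w i))) '' U = W


section Aux
variable {F : Type*} [Field F]

lemma powpow (q i j : ℕ) (y : F) : (y ^ q ^ i) ^ q ^ j = y ^ q ^ (i + j) := by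
  rw [← pow_mul, ← pow_add]

lemma powpow1 (q i : ℕ) (y : F) : (y ^ q ^ i) ^ q = y ^ q ^ (i + 1) := by
  rw [← pow_mul, ← pow_succ]

lemma powq (q j : ℕ) (y : F) : (y ^ q) ^ q ^ j = y ^ q ^ (j + 1) := by
  rw [← pow_mul, ← pow_succ']

lemma powqq (q : ℕ) (y : F) : (y ^ q) ^ q = y ^ q ^ 2 := by
  rw [← pow_mul, ← pow_two]

lemma aux_charP (p n : ℕ) (hp : p.Prime) (hn : 0 < n) [Fintype F]
    (hcard : Fintype.card F = p ^ n) : CharP F p := by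
  have h0 : CharP F (ringChar F) := ringChar.charP F
  obtain ⟨m, hprime, hc⟩ := FiniteField.card F (ringChar F)
  have hdvd : ringChar F ∣ p ^ n := by
    rw [← hcard, hc]
    exact dvd_pow_self _ (by positivity)
  have : ringChar F = p := by
    have := hprime.dvd_of_dvd_pow hdvd
    exact (Nat.prime_dvd_prime_iff_eq hprime hp).mp this
  rwa [this] at h0

lemma frob_add (p r q j : ℕ) [Fact p.Prime] [CharP F p] (hq : q = p ^ r) (u v : F) :
    (u + v) ^ q ^ j = u ^ q ^ j + v ^ q ^ j := by
  subst hq; rw [← pow_mul]; exact add_pow_char_pow ..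

lemma frob_sub (p r q j : ℕ) [Fact p.Prime] [CharP F p] (hq : q = p ^ r) (u v : F) :
    (u - v) ^ q ^ j = u ^ q ^ j - v ^ q ^ j := by
  subst hq; rw [← pow_mul]; exact sub_pow_char_pow ..

lemma red0 [Fintype F] (q n : ℕ) (hcard : Fintype.card F = q ^ n) (s : ℕ) (z : F) :
    z ^ (q ^ n) ^ s = z := by
  induction s with
  | zero => simp
  | succ s ih => rw [pow_succ, pow_mul, ih, ← hcard, FiniteField.pow_card]

/-- exponent conversion: `z ^ q ^ E = z ^ q ^ E'` if `E = E'` or `E = 2t + E'`. -/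
lemma hconv [Fintype F] (q n : ℕ) (hcard : Fintype.card F = q ^ n) (E E' : ℕ)
    (hEE : E = E' ∨ E = n + E') (z : F) : z ^ q ^ E = z ^ q ^ E' := by
  rcases hEE with rfl | rfl
  · rfl
  · rw [pow_add, pow_mul, ← hcard, FiniteField.pow_card]


lemma linIndep10 [Fintype F] {q n : ℕ} (hq : 2 ≤ q)
    (hcard : Fintype.card F = q ^ n)
    (e0 e1 e2 e3 e4 e5 e6 e7 e8 e9 : ℕ) (C0 C1 C2 C3 C4 C5 C6 C7 C8 C9 : F)
    (hnodup : ([e0, e1, e2, e3, e4, e5, e6, e7, e8, e9] : List ℕ).Nodup)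
    (hlt : ∀ m ∈ ([e0, e1, e2, e3, e4, e5, e6, e7, e8, e9] : List ℕ), m < n)
    (H : ∀ x : F, C0 * x ^ q ^ e0 + C1 * x ^ q ^ e1 + C2 * x ^ q ^ e2 + C3 * x ^ q ^ e3
      + C4 * x ^ q ^ e4 + C5 * x ^ q ^ e5 + C6 * x ^ q ^ e6 + C7 * x ^ q ^ e7
      + C8 * x ^ q ^ e8 + C9 * x ^ q ^ e9 = 0) :
    C0 = 0 ∧ C1 = 0 ∧ C2 = 0 ∧ C3 = 0 ∧ C4 = 0 ∧ C5 = 0 ∧ C6 = 0 ∧ C7 = 0 ∧ C8 = 0 ∧ C9 = 0 := by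
  classical
  set L : List ℕ := [e0, e1, e2, e3, e4, e5, e6, e7, e8, e9] with hL
  set e : Fin 10 → ℕ := ![e0, e1, e2, e3, e4, e5, e6, e7, e8, e9] with he
  set C : Fin 10 → F := ![C0, C1, C2, C3, C4, C5, C6, C7, C8, C9] with hC
  have hel : ∀ i : Fin 10, e i = L.get (Fin.cast (by simp [hL]) i) := by
    intro i; fin_cases i <;> rfl
  have hinj : Function.Injective e := by
    intro i j hij
    rw [hel i, hel j] at hij
    have := (List.nodup_iff_injective_get.mp hnodup) hij
    simpa using this
  have helt : ∀ i : Fin 10, e i < n := by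
    intro i; rw [hel i]; exact hlt _ (List.mem_iff_get.mpr ⟨_, rfl⟩)
  have key : ∀ i : Fin 10, C i = 0 := by
    have hn : 0 < n := lt_of_le_of_lt (Nat.zero_le _) (helt 0)
    set P : Polynomial F := ∑ i, Polynomial.C (C i) * Polynomial.X ^ (q ^ (e i)) with hP
    have hdeg : P.natDegree < Fintype.card F := by
      rw [hcard]
      have hb : ∀ i : Fin 10, (Polynomial.C (C i) * Polynomial.X ^ (q ^ (e i))).natDegree
          ≤ q ^ (n - 1) := by
        intro i
        refine le_trans (Polynomial.natDegree_C_mul_le _ _) ?_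
        rw [Polynomial.natDegree_X_pow]
        exact Nat.pow_le_pow_right (by omega) (by have := helt i; omega)
      refine lt_of_le_of_lt (Polynomial.natDegree_sum_le_of_forall_le _ _ (fun i _ => hb i)) ?_
      exact Nat.pow_lt_pow_right (by omega) (by omega)
    have hzero : P = 0 := by
      refine Polynomial.eq_zero_of_natDegree_lt_card_of_eval_eq_zero P
        (Function.injective_id) (fun x => ?_) (by simpa using hdeg)
      simp only [hP, Polynomial.eval_finset_sum, Polynomial.eval_mul, Polynomial.eval_C,
        Polynomial.eval_pow, Polynomial.eval_X, id]
      rw [Fin.sum_univ_succ, Fin.sum_univ_succ, Fin.sum_univ_succ, Fin.sum_univ_succ,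
        Fin.sum_univ_succ, Fin.sum_univ_succ, Fin.sum_univ_succ, Fin.sum_univ_succ,
        Fin.sum_univ_succ, Fin.sum_univ_succ, Fin.sum_univ_zero]
      have := H x
      simp only [hC, he, Matrix.cons_val_zero, Matrix.cons_val_succ]
      linear_combination this
    intro i
    have hco := congrArg (fun Q => Polynomial.coeff Q (q ^ (e i))) hzero
    simp only [hP, Polynomial.finset_sum_coeff, Polynomial.coeff_C_mul,
      Polynomial.coeff_X_pow, Polynomial.coeff_zero] at hco
    rw [Finset.sum_eq_single i] at hco
    · simpa using hco
    · intro j _ hji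
      have : ¬ (q ^ (e i) = q ^ (e j)) := by
        intro hE
        exact hji (hinj (Nat.pow_right_injective hq hE).symm)
      simp [this]
    · simp
  refine ⟨key 0, key 1, key 2, key 3, key 4, key 5, key 6, key 7, key 8, key 9⟩

end Aux

lemma psi_eq {F : Type*} [Field F] (q t : ℕ) (h : F) (z : F) :
    psiMap q t h z = z ^ q ^ 1 + z ^ q ^ (t - 1) - h / h ^ q ^ (t + 1) * z ^ q ^ (t + 1)
      + h / h ^ q ^ (2 * t - 1) * z ^ q ^ (2 * t - 1) := by
  simp [psiMap, pow_one]

set_option maxHeartbeats 1000000 in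
lemma expand_eqs (p r q t : ℕ) (hp : p.Prime) (hr : 0 < r) (hq : q = p ^ r)
    (ht : 4 < t)
    {F : Type*} [Field F] [Fintype F] (hcard : Fintype.card F = q ^ (2 * t))
    (h k a b c d : F)
    (HEQ : ∀ x : F, psiMap q t k (a * x + b * psiMap q t h x)
      = c * x + d * psiMap q t h x) :
    (a ^ q = d) ∧ (a ^ q ^ (t - 1) = d) ∧
    (k / k ^ q ^ (t + 1) * a ^ q ^ (t + 1) = d * (h / h ^ q ^ (t + 1))) ∧
    (k / k ^ q ^ (2 * t - 1) * a ^ q ^ (2 * t - 1) = d * (h / h ^ q ^ (2 * t - 1))) ∧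
    ((h / h ^ q ^ (2 * t - 1)) ^ q ^ (t - 1) * b ^ q ^ (t - 1)
      + k / k ^ q ^ (2 * t - 1) * b ^ q ^ (2 * t - 1) = 0) ∧
    ((h / h ^ q ^ (t + 1)) ^ q * b ^ q + k / k ^ q ^ (t + 1) * b ^ q ^ (t + 1) = 0) := by
  haveI : Fact p.Prime := ⟨hp⟩
  haveI : CharP F p := aux_charP p (r * (2 * t)) hp (by positivity)
    (by rw [hcard, hq, ← pow_mul])
  have hq2 : 2 ≤ q := by
    calc 2 ≤ p := hp.two_le
    _ ≤ p ^ r := Nat.le_self_pow (by omega) p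
    _ = q := hq.symm
  have hfa : ∀ (j : ℕ) (u v : F), (u + v) ^ q ^ j = u ^ q ^ j + v ^ q ^ j :=
    fun j u v => frob_add p r q j hq u v
  have hfs : ∀ (j : ℕ) (u v : F), (u - v) ^ q ^ j = u ^ q ^ j - v ^ q ^ j :=
    fun j u v => frob_sub p r q j hq u v
  have hSj : ∀ (j i2 i3 i4 i5 : ℕ), (1 + j = i2 ∨ 1 + j = 2 * t + i2) →
      ((t - 1) + j = i3 ∨ (t - 1) + j = 2 * t + i3) →
      ((t + 1) + j = i4 ∨ (t + 1) + j = 2 * t + i4) →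
      ((2 * t - 1) + j = i5 ∨ (2 * t - 1) + j = 2 * t + i5) →
      ∀ x : F, (a * x + b * psiMap q t h x) ^ q ^ j
        = a ^ q ^ j * x ^ q ^ j + b ^ q ^ j * x ^ q ^ i2 + b ^ q ^ j * x ^ q ^ i3
          - (h / h ^ q ^ (t + 1)) ^ q ^ j * b ^ q ^ j * x ^ q ^ i4
          + (h / h ^ q ^ (2 * t - 1)) ^ q ^ j * b ^ q ^ j * x ^ q ^ i5 := by
    intro j i2 i3 i4 i5 h2 h3 h4 h5 x
    rw [psi_eq]
    simp only [hfa, hfs, mul_pow, powpow]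
    rw [hconv q (2 * t) hcard (1 + j) i2 h2 x, hconv q (2 * t) hcard ((t - 1) + j) i3 h3 x,
      hconv q (2 * t) hcard ((t + 1) + j) i4 h4 x,
      hconv q (2 * t) hcard ((2 * t - 1) + j) i5 h5 x]
    ring
  obtain ⟨E0, E1, E2, E3, E4, E5, E6, E7, E8, E9⟩ :=
    linIndep10 (q := q) (n := 2 * t) hq2 hcard
      1 (t - 1) (t + 1) (2 * t - 1) (t - 2) (t + 2) 0 2 t (2 * t - 2)
      (a ^ q ^ 1 - d)
      (a ^ q ^ (t - 1) - d)
      (-(k / k ^ q ^ (t + 1) * a ^ q ^ (t + 1)) + d * (h / h ^ q ^ (t + 1)))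
      (k / k ^ q ^ (2 * t - 1) * a ^ q ^ (2 * t - 1) - d * (h / h ^ q ^ (2 * t - 1)))
      ((h / h ^ q ^ (2 * t - 1)) ^ q ^ (t - 1) * b ^ q ^ (t - 1)
        + k / k ^ q ^ (2 * t - 1) * b ^ q ^ (2 * t - 1))
      (-((h / h ^ q ^ (t + 1)) ^ q ^ 1 * b ^ q ^ 1) - k / k ^ q ^ (t + 1) * b ^ q ^ (t + 1))
      ((h / h ^ q ^ (2 * t - 1)) ^ q ^ 1 * b ^ q ^ 1
        - (h / h ^ q ^ (t + 1)) ^ q ^ (t - 1) * b ^ q ^ (t - 1)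
        - k / k ^ q ^ (t + 1) * b ^ q ^ (t + 1)
        + k / k ^ q ^ (2 * t - 1) * b ^ q ^ (2 * t - 1) - c)
      (b ^ q ^ 1 + k / k ^ q ^ (t + 1) * (h / h ^ q ^ (t + 1)) ^ q ^ (t + 1) * b ^ q ^ (t + 1))
      (b ^ q ^ 1 + b ^ q ^ (t - 1)
        - k / k ^ q ^ (t + 1) * (h / h ^ q ^ (2 * t - 1)) ^ q ^ (t + 1) * b ^ q ^ (t + 1)
        - k / k ^ q ^ (2 * t - 1) * (h / h ^ q ^ (t + 1)) ^ q ^ (2 * t - 1) * b ^ q ^ (2 * t - 1))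
      (b ^ q ^ (t - 1)
        + k / k ^ q ^ (2 * t - 1) * (h / h ^ q ^ (2 * t - 1)) ^ q ^ (2 * t - 1) * b ^ q ^ (2 * t - 1))
      (by simp; omega)
      (by intro m hm; simp at hm; omega)
      (by
        intro x
        have hx := HEQ x
        rw [psi_eq q t k] at hx
        rw [hSj 1 2 t (t + 2) 0 (by omega) (by omega) (by omega) (by omega) x,
            hSj (t - 1) t (2 * t - 2) 0 (t - 2) (by omega) (by omega) (by omega) (by omega) x,
            hSj (t + 1) (t + 2) 0 2 t (by omega) (by omega) (by omega) (by omega) x,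
            hSj (2 * t - 1) 0 (t - 2) t (2 * t - 2) (by omega) (by omega) (by omega) (by omega) x,
            psi_eq q t h] at hx
        linear_combination hx)
  refine ⟨?_, ?_, ?_, ?_, E4, ?_⟩
  · rw [pow_one] at E0; exact sub_eq_zero.mp E0
  · exact sub_eq_zero.mp E1
  · linear_combination -E2
  · linear_combination E3
  · linear_combination -E5

set_option maxHeartbeats 1000000 in
lemma norm_eq (p r q t : ℕ) (hp : p.Prime) (hr : 0 < r) (hq : q = p ^ r)
    (hqodd : Odd q) (ht : 4 < t)
    {F : Type*} [Field F] [Fintype F] (hcard : Fintype.card F = q ^ (2 * t))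
    (h k a b c d : F) (hh : h ^ q ^ t * h = -1) (hk : k ^ q ^ t * k = -1)
    (hdet : a * d - b * c ≠ 0)
    (HEQ : ∀ x : F, psiMap q t k (a * x + b * psiMap q t h x)
      = c * x + d * psiMap q t h x) :
    h ^ q ^ 2 * h = k ^ q ^ 2 * k := by
  haveI : Fact p.Prime := ⟨hp⟩
  haveI : CharP F p := aux_charP p (r * (2 * t)) hp (by positivity)
    (by rw [hcard, hq, ← pow_mul])
  have hfa : ∀ (j : ℕ) (u v : F), (u + v) ^ q ^ j = u ^ q ^ j + v ^ q ^ j :=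
    fun j u v => frob_add p r q j hq u v
  have hh0 : h ≠ 0 := by intro h0; rw [h0] at hh; simp at hh
  have hk0 : k ≠ 0 := by intro h0; rw [h0] at hk; simp at hk
  -- Frobenius-raised norm equations
  have hAh : h ^ q ^ (t + 1) * h ^ q = -1 := by
    have h1 := congrArg (· ^ q) hh
    simp only [mul_pow, powpow1, hqodd.neg_one_pow] at h1
    exact h1
  have hAk : k ^ q ^ (t + 1) * k ^ q = -1 := by
    have h1 := congrArg (· ^ q) hk
    simp only [mul_pow, powpow1, hqodd.neg_one_pow] at h1
    exact h1
  -- coefficient value lemmas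
  have hP1v : h / h ^ q ^ (t + 1) = -(h * h ^ q) := by
    have hne : h ^ q ^ (t + 1) ≠ 0 := pow_ne_zero _ hh0
    rw [div_eq_iff hne]
    linear_combination h * hAh
  have hK1v : k / k ^ q ^ (t + 1) = -(k * k ^ q) := by
    have hne : k ^ q ^ (t + 1) ≠ 0 := pow_ne_zero _ hk0
    rw [div_eq_iff hne]
    linear_combination k * hAk
  have hP1q : (h / h ^ q ^ (t + 1)) ^ q = -(h ^ q * h ^ q ^ 2) := by
    rw [hP1v, hqodd.neg_pow, mul_pow, powqq]
  have hK1q : (k / k ^ q ^ (t + 1)) ^ q = -(k ^ q * k ^ q ^ 2) := by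
    rw [hK1v, hqodd.neg_pow, mul_pow, powqq]
  have hP2q : (h / h ^ q ^ (2 * t - 1)) ^ q = h ^ q / h := by
    rw [div_pow, powpow1, hconv q (2 * t) hcard (2 * t - 1 + 1) 0 (by omega) h, pow_zero, pow_one]
  have hK2q : (k / k ^ q ^ (2 * t - 1)) ^ q = k ^ q / k := by
    rw [div_pow, powpow1, hconv q (2 * t) hcard (2 * t - 1 + 1) 0 (by omega) k, pow_zero, pow_one]
  have hK2q2 : (k / k ^ q ^ (2 * t - 1)) ^ q ^ 2 = k ^ q ^ 2 / k ^ q := by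
    rw [← powqq, hK2q, div_pow, powqq]
  have hP2t1 : (h / h ^ q ^ (2 * t - 1)) ^ q ^ (t + 1) = h / h ^ q := by
    rw [div_pow, powpow, hconv q (2 * t) hcard (2 * t - 1 + (t + 1)) t (by omega) h,
      div_eq_div_iff (pow_ne_zero _ hh0) (pow_ne_zero _ hh0)]
    linear_combination hAh - hh
  obtain ⟨E1, E2, E3, E4, E5, E6⟩ := expand_eqs p r q t hp hr hq ht hcard h k a b c d HEQ
  by_cases haa : a = 0
  · -- b-case
    have hb : b ≠ 0 := by
      intro hb0; apply hdet; rw [haa, hb0]; ring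
    have h5 := congrArg (· ^ q ^ 2) E5
    simp only [hfa, mul_pow, powpow] at h5
    rw [show t - 1 + 2 = t + 1 by omega,
      hconv q (2 * t) hcard (2 * t - 1 + 2) 1 (by omega) b, pow_one] at h5
    rw [zero_pow (show q ^ 2 ≠ 0 by have := hp.pos; rw [hq]; positivity)] at h5
    -- h5 : P2^{q^{t+1}} * b^{q^{t+1}} + K2^{q^2} * b^q = 0
    have key2 : (k / k ^ q ^ (t + 1)) * (k / k ^ q ^ (2 * t - 1)) ^ q ^ 2
        = (h / h ^ q ^ (t + 1)) ^ q * (h / h ^ q ^ (2 * t - 1)) ^ q ^ (t + 1) := by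
      apply mul_right_cancel₀ (pow_ne_zero q hb)
      linear_combination (k / k ^ q ^ (t + 1)) * h5
        - (h / h ^ q ^ (2 * t - 1)) ^ q ^ (t + 1) * E6
    rw [hK1v, hK2q2, hP1q, hP2t1] at key2
    -- key2 : -(k*k^q) * (k^{q^2}/k^q) = -(h^q*h^{q^2}) * (h/h^q)
    have hcan : (h ^ q * k ^ q) * (h ^ q ^ 2 * h) = (h ^ q * k ^ q) * (k ^ q ^ 2 * k) := by
      field_simp at key2
      linear_combination (h ^ q * k ^ q) * key2
    exact mul_left_cancel₀ (mul_ne_zero (pow_ne_zero _ hh0) (pow_ne_zero _ hk0)) hcan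
  · -- a-case
    have hd' : a ^ q ^ (t - 1) = a ^ q ^ 1 := by rw [E2, ← E1, pow_one]
    have hstep : a ^ q ^ (2 * t - 1) = a ^ q ^ (t + 1) := by
      have h2 := congrArg (· ^ q ^ t) hd'
      simp only [powpow] at h2
      rw [show t - 1 + t = 2 * t - 1 by omega, show 1 + t = t + 1 by omega] at h2
      exact h2
    rw [hstep] at E4
    have had : d ≠ 0 := by rw [← E1]; exact pow_ne_zero _ haa
    have hkey : (k / k ^ q ^ (2 * t - 1)) * (h / h ^ q ^ (t + 1))
        = (k / k ^ q ^ (t + 1)) * (h / h ^ q ^ (2 * t - 1)) := by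
      apply mul_left_cancel₀ had
      have h3 : (k / k ^ q ^ (2 * t - 1)) * (d * (h / h ^ q ^ (t + 1)))
          = (k / k ^ q ^ (t + 1)) * (d * (h / h ^ q ^ (2 * t - 1))) := by
        rw [← E3, ← E4]; ring
      linear_combination h3
    have hkq := congrArg (· ^ q) hkey
    simp only [mul_pow] at hkq
    rw [hK2q, hP1q, hK1q, hP2q] at hkq
    -- hkq : (k^q/k) * (-(h^q*h^{q^2})) = (-(k^q*k^{q^2})) * (h^q/h)
    have hcan : (h ^ q * k ^ q) * (h ^ q ^ 2 * h) = (h ^ q * k ^ q) * (k ^ q ^ 2 * k) := by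
      field_simp at hkq
      linear_combination (-(h ^ q * k ^ q)) * hkq
    exact mul_left_cancel₀ (mul_ne_zero (pow_ne_zero _ hh0) (pow_ne_zero _ hk0)) hcan
lemma mulVec_fin2 {F : Type*} [Field F] (A : Matrix (Fin 2) (Fin 2) F) (v : Fin 2 → F) :
    A.mulVec v = ![A 0 0 * v 0 + A 0 1 * v 1, A 1 0 * v 0 + A 1 1 * v 1] := by
  funext i
  fin_cases i <;> simp [Matrix.mulVec, dotProduct, Fin.sum_univ_two]

lemma rhoPsi {F : Type*} [Field F] (q t : ℕ) (ρ : F ≃+* F) (g x : F) :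
    ρ (psiMap q t g x) = psiMap q t (ρ g) (ρ x) := by
  simp [psiMap, map_add, map_sub, map_mul, map_pow, map_div₀]

set_option maxHeartbeats 1000000 in
lemma fwd (p r q t : ℕ) (hp : p.Prime) (hr : 0 < r) (hq : q = p ^ r)
    (hqodd : Odd q) (ht : 4 < t)
    {F : Type*} [Field F] [Fintype F] (hcard : Fintype.card F = q ^ (2 * t))
    (h k : F) (hh : h ^ (q ^ t + 1) = -1) (hk : k ^ (q ^ t + 1) = -1)
    (HG : GammaLEquiv (Uspace q t h) (Uspace q t k)) :
    ∃ ρ : F ≃+* F, h ^ q ^ 2 * h = (ρ k) ^ q ^ 2 * (ρ k) := by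
  rw [pow_add, pow_one] at hh hk
  obtain ⟨ρ, A, hA, himg⟩ := HG
  have HEQ : ∀ z : F, psiMap q t k (A 0 0 * z + A 0 1 * psiMap q t (ρ h) z)
      = A 1 0 * z + A 1 1 * psiMap q t (ρ h) z := by
    intro z
    have hmem : (fun w => A.mulVec (fun i => ρ (w i)))
        ![ρ.symm z, psiMap q t h (ρ.symm z)] ∈ Uspace q t k := by
      rw [← himg]
      exact Set.mem_image_of_mem _ ⟨ρ.symm z, rfl⟩
    obtain ⟨y, hy0⟩ := hmem
    have hy : A.mulVec (fun i => ρ ((![ρ.symm z, psiMap q t h (ρ.symm z)]) i))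
        = ![y, psiMap q t k y] := hy0
    have hv : (fun i => ρ ((![ρ.symm z, psiMap q t h (ρ.symm z)]) i))
        = ![z, psiMap q t (ρ h) z] := by
      funext i
      fin_cases i
      · simp
      · simp [rhoPsi]
    rw [hv, mulVec_fin2] at hy
    have h0 := congrFun hy 0
    have h1 := congrFun hy 1
    simp only [Matrix.cons_val_zero, Matrix.cons_val_one, Matrix.head_cons] at h0 h1
    rw [← h0] at h1
    exact h1.symm
  have hdet : A 0 0 * A 1 1 - A 0 1 * A 1 0 ≠ 0 := by
    have h2 := (Matrix.isUnit_iff_isUnit_det A).mp hA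
    rw [Matrix.det_fin_two] at h2
    exact isUnit_iff_ne_zero.mp h2
  have hh1 : (ρ h) ^ q ^ t * (ρ h) = -1 := by
    rw [← map_pow, ← map_mul, hh, map_neg, map_one]
  have hmain := norm_eq p r q t hp hr hq hqodd ht hcard (ρ h) k
    (A 0 0) (A 0 1) (A 1 0) (A 1 1) hh1 hk hdet HEQ
  refine ⟨ρ.symm, ?_⟩
  have h2 := congrArg ρ.symm hmain
  simp only [map_mul, map_pow, RingEquiv.symm_apply_apply] at h2
  exact h2

lemma iter4 {F : Type*} [Field F] (q : ℕ) (l : F) (hb : l ^ q ^ 2 * l = 1) :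
    ∀ s j : ℕ, l ^ q ^ (4 * s + j) = l ^ q ^ j := by
  have hl0 : l ≠ 0 := by
    intro h0; rw [h0] at hb; simp at hb
  have h2 : l ^ q ^ 2 = l⁻¹ := eq_inv_of_mul_eq_one_left hb
  have h4 : l ^ q ^ 4 = l := by
    have e : l ^ q ^ 4 = (l ^ q ^ 2) ^ q ^ 2 := by rw [powpow]
    rw [e, h2, inv_pow, h2, inv_inv]
  intro s j
  induction s with
  | zero => simp
  | succ s ih =>
    have e : 4 * (s + 1) + j = 4 + (4 * s + j) := by omega
    rw [e, ← powpow q 4 (4 * s + j) l, h4, ih]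

lemma rho_image (q t : ℕ) {F : Type*} [Field F] (ρ : F ≃+* F) (h : F) :
    (fun w : Fin 2 → F => fun i => ρ (w i)) '' Uspace q t h = Uspace q t (ρ h) := by
  ext w
  constructor
  · rintro ⟨w', ⟨x, rfl⟩, rfl⟩
    refine ⟨ρ x, ?_⟩
    funext i
    fin_cases i
    · simp
    · simp [rhoPsi]
  · rintro ⟨y, rfl⟩
    refine ⟨![ρ.symm y, psiMap q t h (ρ.symm y)], ⟨ρ.symm y, rfl⟩, ?_⟩
    funext i
    fin_cases i
    · simp
    · simp [rhoPsi]

set_option maxHeartbeats 1000000 in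
lemma suff_core (q t : ℕ) {F : Type*} [Field F] (k l a : F) (hl0 : l ≠ 0) (ha0 : a ≠ 0)
    (hk0 : k ≠ 0)
    (S1 : a ^ q ^ (t - 1) = a ^ q)
    (S2 : a ^ q ^ (t + 1) * l ^ q ^ (t + 1) = a ^ q * l)
    (S3 : a ^ q ^ (2 * t - 1) * l ^ q ^ (2 * t - 1) = a ^ q * l) :
    ∃ A : Matrix (Fin 2) (Fin 2) F, IsUnit A ∧
      (fun v => Matrix.mulVec A v) '' (Uspace q t (l * k)) = Uspace q t k := by
  have hlk0 : ∀ n : ℕ, l ^ n ≠ 0 := fun n => pow_ne_zero _ hl0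
  have hkk0 : ∀ n : ℕ, k ^ n ≠ 0 := fun n => pow_ne_zero _ hk0
  have hpsi : ∀ x : F, psiMap q t k (a * x) = a ^ q * psiMap q t (l * k) x := by
    intro x
    have c3 : k / k ^ q ^ (t + 1) * a ^ q ^ (t + 1)
        = a ^ q * ((l * k) / (l ^ q ^ (t + 1) * k ^ q ^ (t + 1))) := by
      rw [div_mul_eq_mul_div, mul_div_assoc', div_eq_div_iff (hkk0 _) (mul_ne_zero (hlk0 _) (hkk0 _))]
      linear_combination k * k ^ q ^ (t + 1) * S2
    have c4 : k / k ^ q ^ (2 * t - 1) * a ^ q ^ (2 * t - 1)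
        = a ^ q * ((l * k) / (l ^ q ^ (2 * t - 1) * k ^ q ^ (2 * t - 1))) := by
      rw [div_mul_eq_mul_div, mul_div_assoc', div_eq_div_iff (hkk0 _) (mul_ne_zero (hlk0 _) (hkk0 _))]
      linear_combination k * k ^ q ^ (2 * t - 1) * S3
    simp only [psiMap, mul_pow]
    linear_combination x ^ q ^ (t - 1) * S1 - x ^ q ^ (t + 1) * c3 + x ^ q ^ (2 * t - 1) * c4
  refine ⟨!![a, 0; 0, a ^ q], ?_, ?_⟩
  · rw [Matrix.isUnit_iff_isUnit_det, Matrix.det_fin_two_of]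
    refine isUnit_iff_ne_zero.mpr ?_
    intro hcontra
    apply mul_ne_zero ha0 (pow_ne_zero q ha0)
    linear_combination hcontra
  · have hmv : ∀ x : F, Matrix.mulVec !![a, 0; 0, a ^ q] ![x, psiMap q t (l * k) x]
        = ![a * x, psiMap q t k (a * x)] := by
      intro x
      rw [mulVec_fin2]
      funext i
      fin_cases i
      · simp
      · simp [hpsi]
    ext w
    constructor
    · rintro ⟨w', ⟨x, rfl⟩, rfl⟩
      exact ⟨a * x, by beta_reduce; rw [hmv]⟩
    · rintro ⟨y, rfl⟩
      refine ⟨![a⁻¹ * y, psiMap q t (l * k) (a⁻¹ * y)], ⟨a⁻¹ * y, rfl⟩, ?_⟩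
      beta_reduce
      rw [hmv, show a * (a⁻¹ * y) = y by field_simp]

set_option maxHeartbeats 1000000 in
lemma bwd (q t : ℕ) (hqodd : Odd q) (hq2 : 2 ≤ q) (ht : 4 < t)
    {F : Type*} [Field F] [Fintype F] (hcard : Fintype.card F = q ^ (2 * t))
    (h k : F) (hk0 : k ≠ 0)
    (ρ : F ≃+* F) (l : F) (hl : l ^ (q ^ 2 + 1) = 1)
    (hsp : t % 4 = 2 ∨ l = 1 ∨ l = -1)
    (hhl : h = l * ρ k) :
    GammaLEquiv (Uspace q t h) (Uspace q t k) := by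
  have hl0 : l ≠ 0 := by
    intro h0; rw [h0, zero_pow (by omega)] at hl; exact one_ne_zero hl.symm
  set l' : F := ρ.symm l with hl'def
  have hl'0 : l' ≠ 0 := fun h0 => hl0 (by
    have := congrArg ρ h0
    simpa [hl'def] using this)
  have hl'b : l' ^ q ^ 2 * l' = 1 := by
    have h1 := congrArg ρ.symm hl
    rw [map_pow, map_one, pow_add, pow_one] at h1
    exact h1
  have hsymm_h : ρ.symm h = l' * k := by
    rw [hhl, map_mul, RingEquiv.symm_apply_apply, hl'def]
  -- construct a with the three coefficient identities
  obtain ⟨a, ha0, S1, S2, S3⟩ :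
      ∃ a : F, a ≠ 0 ∧ a ^ q ^ (t - 1) = a ^ q ∧
        a ^ q ^ (t + 1) * l' ^ q ^ (t + 1) = a ^ q * l' ∧
        a ^ q ^ (2 * t - 1) * l' ^ q ^ (2 * t - 1) = a ^ q * l' := by
    rcases hsp with ht2 | hpm
    · -- t ≡ 2 mod 4 : a := l' ^ m with q = 2m+1
      obtain ⟨m, hm⟩ := hqodd
      have haj : ∀ (z : F) (j : ℕ), (z ^ m) ^ q ^ j = (z ^ q ^ j) ^ m :=
        fun z j => pow_right_comm z m (q ^ j)
      have lt1 : l' ^ q ^ (t - 1) = l' ^ q ^ 1 := by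
        rw [show t - 1 = 4 * ((t - 1) / 4) + 1 by omega, iter4 q l' hl'b]
      have lt2 : l' ^ q ^ (t + 1) = l' ^ q ^ 3 := by
        rw [show t + 1 = 4 * ((t - 2) / 4) + 3 by omega, iter4 q l' hl'b]
      have lt3 : l' ^ q ^ (2 * t - 1) = l' ^ q ^ 3 := by
        rw [show 2 * t - 1 = 4 * ((2 * t - 4) / 4) + 3 by omega, iter4 q l' hl'b]
      have h3 : l' ^ q ^ 3 * l' ^ q = 1 := by
        have h1 := congrArg (· ^ q) hl'b
        simp only [mul_pow, powpow1, one_pow] at h1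
        rw [show (2:ℕ) + 1 = 3 by norm_num] at h1
        exact h1
      have hbb : (l' ^ q) ^ (2 * m + 1) * l' = 1 := by
        rw [← pow_mul, show q * (2 * m + 1) = q ^ 2 by rw [← hm]; ring]
        exact hl'b
      refine ⟨l' ^ m, pow_ne_zero _ hl'0, ?_, ?_, ?_⟩
      · rw [haj, lt1, pow_one]
        exact pow_right_comm l' q m
      · apply mul_right_cancel₀ (pow_ne_zero (m + 1) (pow_ne_zero q hl'0))
        calc (l' ^ m) ^ q ^ (t + 1) * l' ^ q ^ (t + 1) * (l' ^ q) ^ (m + 1)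
            = (l' ^ q ^ 3 * l' ^ q) ^ (m + 1) := by rw [haj, lt2]; ring
          _ = 1 := by rw [h3, one_pow]
          _ = (l' ^ q) ^ (2 * m + 1) * l' := hbb.symm
          _ = (l' ^ m) ^ q * l' * (l' ^ q) ^ (m + 1) := by
              rw [← pow_right_comm l' q m]; ring
      · apply mul_right_cancel₀ (pow_ne_zero (m + 1) (pow_ne_zero q hl'0))
        calc (l' ^ m) ^ q ^ (2 * t - 1) * l' ^ q ^ (2 * t - 1) * (l' ^ q) ^ (m + 1)
            = (l' ^ q ^ 3 * l' ^ q) ^ (m + 1) := by rw [haj, lt3]; ring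
          _ = 1 := by rw [h3, one_pow]
          _ = (l' ^ q) ^ (2 * m + 1) * l' := hbb.symm
          _ = (l' ^ m) ^ q * l' * (l' ^ q) ^ (m + 1) := by
              rw [← pow_right_comm l' q m]; ring
    · rcases hpm with rfl | rfl
      · refine ⟨1, one_ne_zero, by simp, ?_, ?_⟩ <;> simp [hl'def]
      · have hml : l' = -1 := by rw [hl'def]; simp
        refine ⟨1, one_ne_zero, by simp, ?_, ?_⟩ <;>
          rw [hml] <;> simp [Odd.neg_one_pow (hqodd.pow)]
  obtain ⟨A, hAu, hAimg⟩ := suff_core q t k l' a hl'0 ha0 hk0 S1 S2 S3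
  refine ⟨ρ.symm, A, hAu, ?_⟩
  have hcomp : (fun w : Fin 2 → F => A.mulVec (fun i => ρ.symm (w i)))
      = (fun v => A.mulVec v) ∘ (fun w : Fin 2 → F => fun i => ρ.symm (w i)) := rfl
  rw [hcomp, Set.image_comp, rho_image, hsymm_h, hAimg]

set_option maxHeartbeats 1000000 in
/-- For `t > 4` and `h^{q^t+1} = k^{q^t+1} = -1`: `U_h` and `U_k` are `ΓL(2,q^n)`-equivalent
iff `h = ±k^ρ` for some automorphism `ρ` when `t ≢ 2 (mod 4)`, and iff `h = ℓ·k^ρ` with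
`ℓ^{q²+1} = 1` when `t ≡ 2 (mod 4)`. -/
theorem stmt11 (p r q t : ℕ) (hp : p.Prime) (hpodd : Odd p) (hr : 0 < r)
    (hq : q = p ^ r) (ht : 4 < t)
    (F : Type*) [Field F] [Fintype F] (hcard : Fintype.card F = q ^ (2 * t))
    (h k : F) (hh : h ^ (q ^ t + 1) = -1) (hk : k ^ (q ^ t + 1) = -1) :
    (t % 4 ≠ 2 →
      (GammaLEquiv (Uspace q t h) (Uspace q t k) ↔
        ∃ ρ : F ≃+* F, h = ρ k ∨ h = -ρ k)) ∧
    (t % 4 = 2 →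
      (GammaLEquiv (Uspace q t h) (Uspace q t k) ↔
        ∃ ρ : F ≃+* F, ∃ ℓ : F, ℓ ^ (q ^ 2 + 1) = 1 ∧ h = ℓ * ρ k)) := by
  have hqodd : Odd q := by rw [hq]; exact hpodd.pow
  have hq2 : 2 ≤ q := by
    calc 2 ≤ p := hp.two_le
    _ ≤ p ^ r := Nat.le_self_pow (by omega) p
    _ = q := hq.symm
  have hhprod : h ^ q ^ t * h = -1 := by
    have := hh; rwa [pow_add, pow_one] at this
  have hkprod : k ^ q ^ t * k = -1 := by
    have := hk; rwa [pow_add, pow_one] at this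
  have hh0 : h ≠ 0 := by intro h0; rw [h0] at hhprod; simp at hhprod
  have hk0 : k ≠ 0 := by intro h0; rw [h0] at hkprod; simp at hkprod
  constructor
  · -- case t % 4 ≠ 2
    intro ht2
    constructor
    · intro HG
      obtain ⟨ρ, hmain⟩ := fwd p r q t hp hr hq hqodd ht hcard h k hh hk HG
      set κ : F := ρ k with hκ
      have hκ0 : κ ≠ 0 := by
        intro h0
        exact hk0 (ρ.injective (h0.trans (map_zero ρ).symm))
      set l : F := h / κ with hldef
      have hb : l ^ q ^ 2 * l = 1 := by
        rw [hldef, div_pow, div_mul_div_comm, hmain,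
          div_self (mul_ne_zero (pow_ne_zero _ hκ0) hκ0)]
      have hl2 : l * l = 1 := by
        rcases Nat.even_or_odd t with hte | hto
        · have ht20 : t % 2 = 0 := Nat.even_iff.mp hte
          have h1 : l ^ q ^ t = l := by
            rw [show t = 4 * (t / 4) + 0 by omega, iter4 q l hb, pow_zero, pow_one]
          have hκt : κ ^ q ^ t * κ = -1 := by
            rw [hκ, ← map_pow, ← map_mul, hkprod, map_neg, map_one]
          have h2 : l ^ q ^ t * l = 1 := by
            rw [hldef, div_pow, div_mul_div_comm, hhprod, hκt]
            simp
          rwa [h1] at h2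
        · have ht21 : t % 2 = 1 := Nat.odd_iff.mp hto
          have h1 : l ^ q ^ (2 * t) = l ^ q ^ 2 := by
            rw [show 2 * t = 4 * ((2 * t - 2) / 4) + 2 by omega, iter4 q l hb]
          have h2 : l ^ q ^ (2 * t) = l := by
            rw [hconv q (2 * t) hcard (2 * t) 0 (by omega) l, pow_zero, pow_one]
          have h3 : l ^ q ^ 2 = l := by rw [← h1, h2]
          rwa [h3] at hb
      have hfac : (l - 1) * (l + 1) = 0 := by linear_combination hl2
      rcases mul_eq_zero.mp hfac with h1 | h1
      · refine ⟨ρ, Or.inl ?_⟩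
        have hl1 : l = 1 := by linear_combination h1
        have := hl1
        rw [hldef, div_eq_one_iff_eq hκ0] at this
        rw [this, hκ]
      · refine ⟨ρ, Or.inr ?_⟩
        have hl1 : l = -1 := by linear_combination h1
        have h2 : h = -1 * κ := by
          rw [← hl1, hldef, div_mul_cancel₀ _ hκ0]
        rw [h2, hκ]; ring
    · rintro ⟨ρ, h1 | h1⟩
      · exact bwd q t hqodd hq2 ht hcard h k hk0 ρ 1 (one_pow _)
          (Or.inr (Or.inl rfl)) (by rw [one_mul]; exact h1)
      · refine bwd q t hqodd hq2 ht hcard h k hk0 ρ (-1) ?_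
          (Or.inr (Or.inr rfl)) (by rw [neg_one_mul]; exact h1)
        have heven : Even (q ^ 2 + 1) := (hqodd.pow).add_one
        exact heven.neg_one_pow
  · -- case t % 4 = 2
    intro ht2
    constructor
    · intro HG
      obtain ⟨ρ, hmain⟩ := fwd p r q t hp hr hq hqodd ht hcard h k hh hk HG
      set κ : F := ρ k with hκ
      have hκ0 : κ ≠ 0 := by
        intro h0
        exact hk0 (ρ.injective (h0.trans (map_zero ρ).symm))
      refine ⟨ρ, h / κ, ?_, ?_⟩
      · rw [pow_add, pow_one, div_pow, div_mul_div_comm, hmain,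
          div_self (mul_ne_zero (pow_ne_zero _ hκ0) hκ0)]
      · rw [div_mul_cancel₀ _ hκ0]
    · rintro ⟨ρ, l, hl, hhl⟩
      exact bwd q t hqodd hq2 ht hcard h k hk0 ρ l hl (Or.inl ht2) hhl
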